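/- Let p be a prime, let P be a finite p-group acting by automorphisms on a nontrivial finite p-group K. Then there exists a surjective group homomorphism f : K → ℤ/pℤ that is P-invariant, i.e., f(σ • k) = f(k) for all σ ∈ P and k ∈ K. Equivalently, K has a P-stable normal subgroup N such that K/N is cyclic of order p and the induced action of P on K/N is trivial. -/

import Mathlib

lemma exists_dual_ne_zero (p : ℕ) [Fact p.Prime] (V : Type) [AddCommGroup V]
    [Module (ZMod p) V] (v : V) (hv : v ≠ 0) :
    ∃ φ : V →ₗ[ZMod p] ZMod p, φ v ≠ 0 := by
  by_contra h
  push_neg at h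
  exact hv ((Module.forall_dual_apply_eq_zero_iff (ZMod p) _).mp h)

lemma exists_ne_one_hom_to_zmod_of_comm (p : ℕ) (hp : p.Prime)
    (A : Type) [CommGroup A] [Finite A] [Nontrivial A] (hA : IsPGroup p A) :
    ∃ f : A →* Multiplicative (ZMod p), f ≠ 1 := by
  haveI : Fact p.Prime := ⟨hp⟩
  haveI := Fintype.ofFinite A
  have hpdvd : p ∣ Fintype.card A := by
    obtain ⟨n, hn0, hn⟩ := hA.nontrivial_iff_card.mp inferInstance
    rw [Nat.card_eq_fintype_card] at hn
    exact hn ▸ dvd_pow_self _ hn0.ne'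
  obtain ⟨a, ha⟩ := exists_prime_orderOf_dvd_card p hpdvd
  set N : Subgroup A := (powMonoidHom p : A →* A).range with hN
  have hNtop : N ≠ ⊤ := by
    intro htop
    have hsurj : Function.Surjective (powMonoidHom p : A →* A) :=
      MonoidHom.range_eq_top.mp htop
    have hinj : Function.Injective (powMonoidHom p : A →* A) :=
      Finite.injective_iff_surjective.mpr hsurj
    have : a = 1 := by
      apply hinj
      simp only [powMonoidHom_apply, one_pow]
      exact ha ▸ pow_orderOf_eq_one a
    rw [this, orderOf_one] at ha
    exact hp.one_lt.ne' ha.symm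
  obtain ⟨x, hx⟩ : ∃ x : A, x ∉ N := by
    by_contra h
    push_neg at h
    exact hNtop ((Subgroup.eq_top_iff' N).mpr h)
  have hxV : (QuotientGroup.mk x : A ⧸ N) ≠ 1 := by
    rw [Ne, QuotientGroup.eq_one_iff]
    exact hx
  have hVp : ∀ v : Additive (A ⧸ N), p • v = 0 := by
    intro v
    have h1 : (Additive.toMul v) ^ p = 1 := by
      induction (Additive.toMul v) using QuotientGroup.induction_on with
      | H z =>
        rw [← QuotientGroup.mk_pow]
        exact (QuotientGroup.eq_one_iff _).mpr ⟨z, rfl⟩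
    have := congrArg Additive.ofMul h1
    simpa [ofMul_pow] using this
  letI : Module (ZMod p) (Additive (A ⧸ N)) := AddCommGroup.zmodModule hVp
  have hv : (Additive.ofMul (QuotientGroup.mk x : A ⧸ N)) ≠ 0 := by
    simpa using hxV
  obtain ⟨φ, hφ⟩ := exists_dual_ne_zero p (Additive (A ⧸ N)) _ hv
  let g : (A ⧸ N) →* Multiplicative (ZMod p) :=
    AddMonoidHom.toMultiplicativeRight φ.toAddMonoidHom
  refine ⟨g.comp (QuotientGroup.mk' N), ?_⟩
  intro h
  apply hφ
  have := congrArg (fun ψ : A →* Multiplicative (ZMod p) => ψ x) h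
  simpa [g] using this

lemma exists_ne_one_hom_to_zmod (p : ℕ) (hp : p.Prime)
    (K : Type) [Group K] [Finite K] [Nontrivial K] (hK : IsPGroup p K) :
    ∃ f : K →* Multiplicative (ZMod p), f ≠ 1 := by
  haveI : Fact p.Prime := ⟨hp⟩
  haveI : Group.IsNilpotent K := hK.isNilpotent
  -- the commutator subgroup is proper
  have hcomm : commutator K ≠ ⊤ := by
    intro htop
    have hall : ∀ n, (⊤ : Subgroup K).lowerCentralSeries n = ⊤ := by
      intro n
      induction n with
      | zero => exact Subgroup.lowerCentralSeries_zero _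
      | succ n ih =>
        rw [lowerCentralSeries_succ, ih]
        show (⊤ : Subgroup K).lowerCentralSeries 1 = ⊤
        rw [Subgroup.top_lowerCentralSeries_one]
        exact htop
    obtain ⟨n, hn⟩ := nilpotent_iff_lowerCentralSeries.mp ‹Group.IsNilpotent K›
    rw [hall n] at hn
    exact (top_ne_bot hn)
  haveI : Nontrivial (Abelianization K) := by
    obtain ⟨x, hx⟩ : ∃ x : K, x ∉ commutator K := by
      by_contra h
      push_neg at h
      exact hcomm ((Subgroup.eq_top_iff' _).mpr h)
    refine ⟨Abelianization.of x, 1, ?_⟩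
    rw [Ne, ← QuotientGroup.eq_one_iff (G := K) (N := commutator K) x] at *
    exact hx
  have hA : IsPGroup p (Abelianization K) := hK.to_quotient (commutator K)
  obtain ⟨f', hf'⟩ := exists_ne_one_hom_to_zmod_of_comm p hp (Abelianization K) hA
  refine ⟨f'.comp Abelianization.of, ?_⟩
  intro h
  apply hf'
  refine Abelianization.hom_ext _ _ ?_
  ext z
  exact congrArg (fun ψ : K →* Multiplicative (ZMod p) => ψ z) h

/-- let `p` be a prime and let a finite `p`-group `P` act by automorphisms
(via `ρ : P →* MulAut K`) on a nontrivial finite `p`-group `K`.  Then there is a surjective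
homomorphism `f : K → ℤ/pℤ` which is `P`-invariant: `f (σ • k) = f k` for all `σ ∈ P`,
`k ∈ K`. -/
theorem exists_invariant_surjection_to_zmod (p : ℕ) (hp : p.Prime)
    (P K : Type) [Group P] [Group K] [Finite P] [Finite K] [Nontrivial K]
    (hP : IsPGroup p P) (hK : IsPGroup p K) (ρ : P →* MulAut K) :
    ∃ f : K →* Multiplicative (ZMod p),
      Function.Surjective f ∧ ∀ (σ : P) (k : K), f (ρ σ k) = f k := by
  haveI : Fact p.Prime := ⟨hp⟩
  set H := K →* Multiplicative (ZMod p) with hH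
  haveI : Finite H :=
    Finite.of_injective (fun f : H => (f : K → Multiplicative (ZMod p)))
      DFunLike.coe_injective
  -- H is a nontrivial p-group
  obtain ⟨f₀, hf₀⟩ := exists_ne_one_hom_to_zmod p hp K hK
  haveI : Nontrivial H := ⟨f₀, 1, hf₀⟩
  have hHp : IsPGroup p H := by
    intro f
    refine ⟨1, ?_⟩
    ext k
    rw [pow_one]
    show (f k) ^ p = 1
    have : (Multiplicative.toAdd (f k)) = (Multiplicative.toAdd (f k)) := rfl
    apply Multiplicative.toAdd.injective
    show p • (Multiplicative.toAdd (f k)) = 0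
    rw [nsmul_eq_mul]
    simp [ZMod.natCast_self]
  have hpH : p ∣ Nat.card H := by
    obtain ⟨n, hn0, hn⟩ := hHp.nontrivial_iff_card.mp inferInstance
    exact hn ▸ dvd_pow_self _ hn0.ne'
  -- the action of P on H
  letI : MulAction P H :=
    { smul := fun σ f => f.comp (ρ σ⁻¹).toMonoidHom
      one_smul := fun f => by
        show f.comp (ρ (1 : P)⁻¹).toMonoidHom = f
        ext k
        simp
      mul_smul := fun σ τ f => by
        show f.comp (ρ (σ * τ)⁻¹).toMonoidHom
          = (f.comp (ρ τ⁻¹).toMonoidHom).comp (ρ σ⁻¹).toMonoidHom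
        ext k
        simp [mul_comm] }
  have hone : (1 : H) ∈ MulAction.fixedPoints P H := by
    intro σ
    show (1 : H).comp (ρ σ⁻¹).toMonoidHom = 1
    ext k
    rfl
  obtain ⟨f, hf, hfne⟩ :=
    hP.exists_fixed_point_of_prime_dvd_card_of_fixed_point H hpH hone
  have hfone : f ≠ 1 := fun h => hfne (h ▸ rfl)
  refine ⟨f, ?_, ?_⟩
  · -- surjectivity
    haveI : Fact (Nat.card (Multiplicative (ZMod p))).Prime := by
      constructor
      have : Nat.card (Multiplicative (ZMod p)) = p := by
        simp [Nat.card_eq_fintype_card, ZMod.card]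
      rw [this]; exact hp
    rcases f.range.eq_bot_or_eq_top_of_prime_card with hbot | htop
    · exfalso
      apply hfone
      ext k
      have : f k ∈ f.range := ⟨k, rfl⟩
      rw [hbot] at this
      simpa using this
    · exact MonoidHom.range_eq_top.mp htop
  · -- invariance
    intro σ k
    have := hf σ⁻¹
    have h2 : f.comp (ρ σ⁻¹⁻¹).toMonoidHom = f := this
    rw [inv_inv] at h2
    exact congrArg (fun ψ : H => ψ k) h2 ▸ rfl
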